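/- The MRXI forward operator is compact: let Ω, D ⊂ ℝ^d be bounded measurable sets whose closures are disjoint, let a ∈ ℝ^d lie outside the closure of Ω, and let σ, α ∈ ℝ^d. Then the linear map 𝒦 : L²(Ω) → L²(D) defined by (𝒦c)(s) := ∫_Ω κ_{σ,a,α}(s,x) c(x) dx is a well-defined bounded linear operator and is a compact operator. -/

import Mathlib

open Matrix MeasureTheory

/-- Euclidean norm of a vector in `ℝ^d`. -/
noncomputable def enorm' {d : ℕ} (v : Fin d → ℝ) : ℝ := Real.sqrt (∑ i, v i ^ 2)

/-- The dipole matrix `D(v) = 3 v vᵀ / |v|⁵ − I / |v|³`. -/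
noncomputable def Dmat {d : ℕ} (v : Fin d → ℝ) : Matrix (Fin d) (Fin d) ℝ :=
  (3 / enorm' v ^ 5) • Matrix.vecMulVec v v
    - (enorm' v ^ 3)⁻¹ • (1 : Matrix (Fin d) (Fin d) ℝ)

/-- The MRXI kernel `κ_{σ,a,α}(w,x) = σᵀ D(w−x) D(x−a) α`. -/
noncomputable def kappa {d : ℕ} (σ a α : Fin d → ℝ) (w x : Fin d → ℝ) : ℝ :=
  σ ⬝ᵥ (Dmat (w - x)).mulVec ((Dmat (x - a)).mulVec α)

lemma enorm'_pos {d : ℕ} {v : Fin d → ℝ} (hv : v ≠ 0) : 0 < enorm' v := by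
  have : ∃ i, v i ≠ 0 := by
    by_contra h; push_neg at h; exact hv (funext h)
  obtain ⟨i, hi⟩ := this
  refine Real.sqrt_pos.2 ?_
  refine Finset.sum_pos' (fun j _ => sq_nonneg _) ⟨i, Finset.mem_univ i, ?_⟩
  positivity

lemma continuous_enorm' {d : ℕ} : Continuous (enorm' (d := d)) := by
  unfold enorm'; fun_prop

lemma continuousOn_dmat {d : ℕ} (i j : Fin d) :
    ContinuousOn (fun v : Fin d → ℝ => Dmat v i j) {v | v ≠ 0} := by
  have h1 : ∀ v : Fin d → ℝ, Dmat v i j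
      = 3 / enorm' v ^ 5 * (v i * v j) - (enorm' v ^ 3)⁻¹ * (if i = j then 1 else 0) := by
    intro v
    simp [Dmat, Matrix.sub_apply, Matrix.smul_apply, Matrix.vecMulVec_apply, Matrix.one_apply,
      smul_eq_mul, mul_ite, mul_one, mul_zero]
  simp only [h1]
  have hne : ∀ v ∈ {v : Fin d → ℝ | v ≠ 0}, enorm' v ≠ 0 :=
    fun v hv => (enorm'_pos hv).ne'
  apply ContinuousOn.sub
  · exact (continuousOn_const.div ((continuous_enorm'.pow 5).continuousOn)
      (fun v hv => pow_ne_zero _ (hne v hv))).mul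
      (((continuous_apply i).mul (continuous_apply j)).continuousOn)
  · exact (((continuous_enorm'.pow 3).continuousOn).inv₀
      (fun v hv => pow_ne_zero _ (hne v hv))).mul continuousOn_const

lemma ContinuousOn.finsetSum {ι X M : Type*} [TopologicalSpace X] [AddCommMonoid M]
    [TopologicalSpace M] [ContinuousAdd M] {s : Set X} (t : Finset ι) {f : ι → X → M}
    (h : ∀ i ∈ t, ContinuousOn (f i) s) :
    ContinuousOn (fun x => ∑ i ∈ t, f i x) s := by
  classical
  induction t using Finset.induction_on with
  | empty => simpa using continuousOn_const
  | insert _ _ hni ih =>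
    rename_i b t'
    simp only [Finset.sum_insert hni]
    exact (h b (Finset.mem_insert_self b t')).add
      (ih fun i hi => h i (Finset.mem_insert_of_mem hi))

lemma kappa_eq {d : ℕ} (σ a α w x : Fin d → ℝ) :
    kappa σ a α w x
      = ∑ i, σ i * ∑ j, Dmat (w - x) i j * ∑ k, Dmat (x - a) j k * α k := by
  simp [kappa, Matrix.mulVec, dotProduct]

lemma continuousOn_kappa {d : ℕ} (σ a α : Fin d → ℝ) :
    ContinuousOn (fun p : (Fin d → ℝ) × (Fin d → ℝ) => kappa σ a α p.1 p.2)
      {p | p.1 - p.2 ≠ 0 ∧ p.2 - a ≠ 0} := by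
  simp only [kappa_eq]
  have hsub1 : ContinuousOn (fun p : (Fin d → ℝ) × (Fin d → ℝ) => p.1 - p.2)
      {p : (Fin d → ℝ) × (Fin d → ℝ) | p.1 - p.2 ≠ 0 ∧ p.2 - a ≠ 0} :=
    (continuous_fst.sub continuous_snd).continuousOn
  have hsub2 : ContinuousOn (fun p : (Fin d → ℝ) × (Fin d → ℝ) => p.2 - a)
      {p : (Fin d → ℝ) × (Fin d → ℝ) | p.1 - p.2 ≠ 0 ∧ p.2 - a ≠ 0} :=
    (continuous_snd.sub continuous_const).continuousOn
  apply ContinuousOn.finsetSum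
  intro i _
  apply ContinuousOn.mul continuousOn_const
  apply ContinuousOn.finsetSum
  intro j _
  apply ContinuousOn.mul
  · exact (continuousOn_dmat i j).comp hsub1 (fun p hp => hp.1)
  apply ContinuousOn.finsetSum
  intro k _
  apply ContinuousOn.mul ?_ continuousOn_const
  exact (continuousOn_dmat j k).comp hsub2 (fun p hp => hp.2)

lemma isCompactOperator_smulRight {H F : Type*} [NormedAddCommGroup H] [NormedSpace ℝ H]
    [NormedAddCommGroup F] [NormedSpace ℝ F] (φ : H →L[ℝ] ℝ) (v : F) :
    IsCompactOperator ⇑(φ.smulRight v) := by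
  refine ⟨(fun t : ℝ => t • v) '' Set.Icc (-‖φ‖) ‖φ‖,
    isCompact_Icc.image (continuous_id.smul continuous_const), ?_⟩
  apply Filter.mem_of_superset (Metric.closedBall_mem_nhds (0 : H) one_pos)
  intro x hx
  refine ⟨φ x, ?_, rfl⟩
  have h1 : ‖φ x‖ ≤ ‖φ‖ * ‖x‖ := φ.le_opNorm x
  have h2 : ‖x‖ ≤ 1 := by simpa using hx
  have h3 : |φ x| ≤ ‖φ‖ := by
    calc |φ x| = ‖φ x‖ := rfl
    _ ≤ ‖φ‖ * ‖x‖ := h1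
    _ ≤ ‖φ‖ * 1 := by nlinarith [norm_nonneg φ]
    _ = ‖φ‖ := mul_one _
  exact abs_le.1 h3

lemma isCompactOperator_finsetSum {ι H F : Type*} [NormedAddCommGroup H] [NormedSpace ℝ H]
    [NormedAddCommGroup F] [NormedSpace ℝ F] (t : Finset ι) (f : ι → (H →L[ℝ] F))
    (h : ∀ i ∈ t, IsCompactOperator ⇑(f i)) :
    IsCompactOperator ⇑(∑ i ∈ t, f i) := by
  classical
  induction t using Finset.induction_on with
  | empty => simpa using isCompactOperator_zero
  | insert _ _ hni ih =>
    rename_i b t'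
    rw [Finset.sum_insert hni]
    have hco : ⇑(f b + ∑ i ∈ t', f i) = ⇑(f b) + ⇑(∑ i ∈ t', f i) := rfl
    rw [hco]
    exact (h b (Finset.mem_insert_self b t')).add
      (ih fun i hi => h i (Finset.mem_insert_of_mem hi))

lemma Lp.coeFn_finsetSum {α : Type*} {m : MeasurableSpace α} {μ : Measure α}
    {ι : Type*} (t : Finset ι) (f : ι → Lp ℝ 2 μ) :
    ⇑(∑ i ∈ t, f i) =ᵐ[μ] fun x => ∑ i ∈ t, f i x := by
  classical
  induction t using Finset.induction_on with
  | empty => simp only [Finset.sum_empty]; exact Lp.coeFn_zero _ _ _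
  | insert _ _ hni ih =>
    rename_i b t'
    simp only [Finset.sum_insert hni]
    filter_upwards [Lp.coeFn_add (f b) (∑ i ∈ t', f i), ih] with x h1 h2
    rw [h1]; simp only [Pi.add_apply]; rw [h2]

set_option maxHeartbeats 2000000 in
set_option synthInstance.maxHeartbeats 400000 in
theorem forward_operator_compact {d : ℕ} (Ω D : Set (Fin d → ℝ))
    (hΩb : Bornology.IsBounded Ω) (hΩm : MeasurableSet Ω)
    (hDb : Bornology.IsBounded D) (hDm : MeasurableSet D)
    (hdisj : Disjoint (closure Ω) (closure D))
    (a : Fin d → ℝ) (ha : a ∉ closure Ω) (σ α : Fin d → ℝ) :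
    ∃ T : Lp ℝ 2 (volume.restrict Ω) →L[ℝ] Lp ℝ 2 (volume.restrict D),
      (∀ c : Lp ℝ 2 (volume.restrict Ω),
        (T c : (Fin d → ℝ) → ℝ) =ᵐ[volume.restrict D]
          fun s => ∫ x in Ω, kappa σ a α s x * (c : (Fin d → ℝ) → ℝ) x) ∧
      IsCompactOperator T := by
  classical
  haveI hfinΩ : IsFiniteMeasure (volume.restrict Ω) :=
    ⟨by rw [Measure.restrict_apply_univ]; exact hΩb.measure_lt_top⟩
  haveI hfinD : IsFiniteMeasure (volume.restrict D) :=
    ⟨by rw [Measure.restrict_apply_univ]; exact hDb.measure_lt_top⟩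
  have hKD : IsCompact (closure D) := hDb.isCompact_closure
  have hKΩ : IsCompact (closure Ω) := hΩb.isCompact_closure
  set S : Set ((Fin d → ℝ) × (Fin d → ℝ)) := closure D ×ˢ closure Ω with hS
  have hSsub : S ⊆ {p | p.1 - p.2 ≠ 0 ∧ p.2 - a ≠ 0} := by
    rintro ⟨s, x⟩ ⟨hs, hx⟩
    refine ⟨sub_ne_zero.2 fun h => ?_, sub_ne_zero.2 fun h => ha (h ▸ hx)⟩
    exact Set.disjoint_left.1 hdisj hx (h ▸ hs)
  have hκS : ContinuousOn (fun p : (Fin d → ℝ) × (Fin d → ℝ) => kappa σ a α p.1 p.2) S :=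
    (continuousOn_kappa σ a α).mono hSsub
  have hScomp : IsCompact S := hKD.prod hKΩ
  obtain ⟨M₀, hM₀⟩ := hScomp.exists_bound_of_continuousOn hκS
  set M : ℝ := max M₀ 0 with hMdef
  have hM : ∀ p ∈ S, |kappa σ a α p.1 p.2| ≤ M := fun p hp => by
    have := hM₀ p hp; rw [Real.norm_eq_abs] at this; exact this.trans (le_max_left _ _)
  have hMnn : 0 ≤ M := le_max_right _ _
  -- membership in L² of the slices
  have hmemg : ∀ s ∈ closure D, MemLp (fun x => kappa σ a α s x) 2 (volume.restrict Ω) := by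
    intro s hs
    have hcont : ContinuousOn (fun x => kappa σ a α s x) (closure Ω) := by
      have := hκS.comp ((Continuous.prodMk_right s).continuousOn)
        (fun x (hx : x ∈ closure Ω) => Set.mk_mem_prod hs hx)
      exact this
    refine MemLp.of_bound ((hcont.mono subset_closure).aestronglyMeasurable hΩm) M ?_
    filter_upwards [ae_restrict_mem hΩm] with x hx
    rw [Real.norm_eq_abs]
    exact hM (s, x) (Set.mk_mem_prod hs (subset_closure hx))
  set g : (Fin d → ℝ) → Lp ℝ 2 (volume.restrict Ω) := fun s =>
    if h : MemLp (fun x => kappa σ a α s x) 2 (volume.restrict Ω) then h.toLp _ else 0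
    with hgdef
  have hgco : ∀ s ∈ closure D,
      ⇑(g s) =ᵐ[volume.restrict Ω] fun x => kappa σ a α s x := by
    intro s hs
    rw [hgdef]
    simp only [dif_pos (hmemg s hs)]
    exact MemLp.coeFn_toLp _
  set cΩ : ℝ := (measureUnivNNReal (volume.restrict Ω) : ℝ) ^ ((2 : ENNReal).toReal⁻¹) with hcΩ
  set cD : ℝ := (measureUnivNNReal (volume.restrict D) : ℝ) ^ ((2 : ENNReal).toReal⁻¹) with hcD
  have hcΩnn : 0 ≤ cΩ := Real.rpow_nonneg (NNReal.coe_nonneg _) _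
  have hcDnn : 0 ≤ cD := Real.rpow_nonneg (NNReal.coe_nonneg _) _
  have hgsub : ∀ s ∈ closure D, ∀ s' ∈ closure D, ∀ C : ℝ, 0 ≤ C →
      (∀ x ∈ Ω, |kappa σ a α s x - kappa σ a α s' x| ≤ C) → ‖g s - g s'‖ ≤ cΩ * C := by
    intro s hs s' hs' C hC hb
    apply Lp.norm_le_of_ae_bound hC
    filter_upwards [Lp.coeFn_sub (g s) (g s'), hgco s hs, hgco s' hs', ae_restrict_mem hΩm]
      with x h1 h2 h3 hx
    rw [h1]; simp only [Pi.sub_apply]; rw [h2, h3, Real.norm_eq_abs]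
    exact hb x hx
  have hgbd : ∀ s ∈ closure D, ‖g s‖ ≤ cΩ * M := by
    intro s hs
    apply Lp.norm_le_of_ae_bound hMnn
    filter_upwards [hgco s hs, ae_restrict_mem hΩm] with x h1 hx
    rw [h1, Real.norm_eq_abs]
    exact hM (s, x) (Set.mk_mem_prod hs (subset_closure hx))
  -- uniform continuity of the kernel
  have hunif : ∀ ε > (0 : ℝ), ∃ δ > (0 : ℝ), ∀ s ∈ closure D, ∀ s' ∈ closure D,
      dist s s' < δ → ∀ x ∈ Ω, |kappa σ a α s x - kappa σ a α s' x| ≤ ε := by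
    intro ε hε
    have huc := hScomp.uniformContinuousOn_of_continuous hκS
    rw [Metric.uniformContinuousOn_iff] at huc
    obtain ⟨δ, hδ, h⟩ := huc ε hε
    refine ⟨δ, hδ, fun s hs s' hs' hss x hx => ?_⟩
    have hd : dist ((s, x) : (Fin d → ℝ) × (Fin d → ℝ)) (s', x) < δ := by
      rw [Prod.dist_eq]
      simp only [dist_self]
      exact max_lt hss hδ
    have := h (s, x) (Set.mk_mem_prod hs (subset_closure hx))
      (s', x) (Set.mk_mem_prod hs' (subset_closure hx)) hd
    rw [Real.dist_eq] at this
    exact this.le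
  -- continuity of g on closure D
  have hgcont : ContinuousOn g (closure D) := by
    rw [Metric.continuousOn_iff]
    intro s hs ε hε
    have hε' : 0 < ε / (cΩ + 1) := div_pos hε (by linarith)
    obtain ⟨δ, hδ, h⟩ := hunif (ε / (cΩ + 1)) hε'
    refine ⟨δ, hδ, fun s' hs' hss' => ?_⟩
    have hb : ‖g s' - g s‖ ≤ cΩ * (ε / (cΩ + 1)) :=
      hgsub s' hs' s hs _ hε'.le (fun x hx => h s' hs' s hs hss' x hx)
    rw [dist_eq_norm]
    calc ‖g s' - g s‖ ≤ cΩ * (ε / (cΩ + 1)) := hb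
      _ = cΩ * ε / (cΩ + 1) := by ring
      _ < ε := by rw [div_lt_iff₀ (by linarith)]; nlinarith
  -- the function Φ
  set Φ : Lp ℝ 2 (volume.restrict Ω) → (Fin d → ℝ) → ℝ :=
    fun c s => @inner ℝ _ _ (g s) c with hΦdef
  have hΦbd : ∀ c, ∀ s ∈ closure D, |Φ c s| ≤ cΩ * M * ‖c‖ := fun c s hs =>
    (abs_real_inner_le_norm _ _).trans
      (mul_le_mul_of_nonneg_right (hgbd s hs) (norm_nonneg c))
  have hΦmem : ∀ c, MemLp (Φ c) 2 (volume.restrict D) := by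
    intro c
    have hcont : ContinuousOn (Φ c) (closure D) := hgcont.inner continuousOn_const
    refine MemLp.of_bound ((hcont.mono subset_closure).aestronglyMeasurable hDm)
      (cΩ * M * ‖c‖) ?_
    filter_upwards [ae_restrict_mem hDm] with s hsD
    rw [Real.norm_eq_abs]
    exact hΦbd c s (subset_closure hsD)
  set Tlin : Lp ℝ 2 (volume.restrict Ω) →ₗ[ℝ] Lp ℝ 2 (volume.restrict D) :=
    { toFun := fun c => (hΦmem c).toLp (Φ c)
      map_add' := by
        intro c c'
        have h : Φ (c + c') = Φ c + Φ c' := funext fun s => by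
          simp only [hΦdef, Pi.add_apply]; exact inner_add_right _ _ _
        exact ((hΦmem (c + c')).toLp_congr ((hΦmem c).add (hΦmem c'))
          (Filter.EventuallyEq.of_eq h)).trans (MemLp.toLp_add _ _)
      map_smul' := by
        intro r c
        have h : Φ (r • c) = r • Φ c := funext fun s => by
          simp only [hΦdef, Pi.smul_apply, smul_eq_mul]
          exact real_inner_smul_right _ _ _
        exact ((hΦmem (r • c)).toLp_congr ((hΦmem c).const_smul r)
          (Filter.EventuallyEq.of_eq h)).trans (MemLp.toLp_const_smul r (hΦmem c)) }
    with hTlin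
  have hTco : ∀ c, ⇑(Tlin c) =ᵐ[volume.restrict D] Φ c := fun c => MemLp.coeFn_toLp (hΦmem c)
  have hTbound : ∀ c, ‖Tlin c‖ ≤ cD * (cΩ * M) * ‖c‖ := by
    intro c
    have hb : ‖Tlin c‖ ≤ cD * (cΩ * M * ‖c‖) := by
      apply Lp.norm_le_of_ae_bound (by positivity)
      filter_upwards [hTco c, ae_restrict_mem hDm] with s h1 h2
      rw [h1, Real.norm_eq_abs]
      exact hΦbd c s (subset_closure h2)
    calc ‖Tlin c‖ ≤ cD * (cΩ * M * ‖c‖) := hb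
      _ = cD * (cΩ * M) * ‖c‖ := by ring
  set T : Lp ℝ 2 (volume.restrict Ω) →L[ℝ] Lp ℝ 2 (volume.restrict D) :=
    Tlin.mkContinuous (cD * (cΩ * M)) hTbound with hT
  have hTapp : ∀ c, T c = Tlin c := fun c => rfl
  refine ⟨T, ?_, ?_⟩
  · -- the integral representation
    intro c
    have hΦint : ∀ s ∈ closure D,
        Φ c s = ∫ x in Ω, kappa σ a α s x * (c : (Fin d → ℝ) → ℝ) x := by
      intro s hs
      have h1 : Φ c s = ∫ x, g s x * c x ∂(volume.restrict Ω) := by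
        have h0 := L2.inner_def (𝕜 := ℝ) (g s) c
        simp only [RCLike.inner_apply, conj_trivial] at h0
        exact h0.trans (integral_congr_ae (Filter.Eventually.of_forall fun x => mul_comm _ _))
      rw [h1]
      refine integral_congr_ae ?_
      filter_upwards [hgco s hs] with x hx
      rw [hx]
    filter_upwards [hTco c, ae_restrict_mem hDm] with s h1 h2
    rw [hTapp c] at *
    rw [h1]
    exact hΦint s (subset_closure h2)
  · -- compactness
    have hclosed : IsClosed {f : Lp ℝ 2 (volume.restrict Ω) →L[ℝ] Lp ℝ 2 (volume.restrict D) |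
        IsCompactOperator f} := isClosed_setOf_isCompactOperator
    suffices hTc : T ∈ closure {f : Lp ℝ 2 (volume.restrict Ω) →L[ℝ]
        Lp ℝ 2 (volume.restrict D) | IsCompactOperator f} by
      rw [hclosed.closure_eq] at hTc; exact hTc
    rw [Metric.mem_closure_iff]
    intro ε hε
    have hε₁ : 0 < ε / (cD * cΩ + 1) := div_pos hε (by positivity)
    set ε₁ : ℝ := ε / (cD * cΩ + 1) with hε₁def
    obtain ⟨δ, hδ, hu⟩ := hunif ε₁ hε₁
    have hcover : closure D ⊆ ⋃ s ∈ closure D, Metric.ball s δ := fun s hs =>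
      Set.mem_biUnion hs (Metric.mem_ball_self hδ)
    obtain ⟨t, hts, htfin, htcov⟩ :=
      hKD.elim_finite_subcover_image (fun s _ => Metric.isOpen_ball) hcover
    set n := htfin.toFinset.card with hn
    set ctr : Fin n → (Fin d → ℝ) := fun i => ((htfin.toFinset.equivFin.symm i : htfin.toFinset) : Fin d → ℝ) with hctr
    have hctrmem : ∀ i, ctr i ∈ closure D := fun i =>
      hts (htfin.mem_toFinset.mp (htfin.toFinset.equivFin.symm i).2)
    set Q : Fin n → Set (Fin d → ℝ) := fun i =>
      (D ∩ Metric.ball (ctr i) δ) \ (⋃ j, ⋃ (_ : j < i), Metric.ball (ctr j) δ) with hQ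
    have hQmeas : ∀ i, MeasurableSet (Q i) := fun i =>
      (hDm.inter measurableSet_ball).diff
        (MeasurableSet.iUnion fun j => MeasurableSet.iUnion fun _ => measurableSet_ball)
    set χ : Fin n → Lp ℝ 2 (volume.restrict D) := fun i =>
      indicatorConstLp 2 (hQmeas i) (measure_ne_top _ _) (1 : ℝ) with hχ
    set Tn : Lp ℝ 2 (volume.restrict Ω) →L[ℝ] Lp ℝ 2 (volume.restrict D) :=
      ∑ i : Fin n, (innerSL ℝ (g (ctr i))).smulRight (χ i) with hTn
    have hTnc : IsCompactOperator ⇑Tn :=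
      isCompactOperator_finsetSum _ _ (fun i _ => isCompactOperator_smulRight _ _)
    refine ⟨Tn, hTnc, ?_⟩
    rw [dist_eq_norm]
    have hexists : ∀ s ∈ D, ∃ i : Fin n,
        (s ∈ Q i ∧ dist s (ctr i) < δ) ∧ ∀ j, j ≠ i → s ∉ Q j := by
      intro s hsD
      have hs' : s ∈ closure D := subset_closure hsD
      have h1 : ∃ x ∈ t, s ∈ Metric.ball x δ := by
        have := htcov hs'
        simpa using this
      obtain ⟨x, hxt, hx⟩ := h1
      have h2 : ∃ i : Fin n, ctr i = x :=
        ⟨htfin.toFinset.equivFin ⟨x, htfin.mem_toFinset.mpr hxt⟩, by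
          simp [hctr]⟩
      obtain ⟨i0, hi0⟩ := h2
      set A : Finset (Fin n) := Finset.univ.filter (fun i => s ∈ Metric.ball (ctr i) δ) with hA
      have hAne : A.Nonempty := ⟨i0, by rw [hA, Finset.mem_filter]; exact ⟨Finset.mem_univ _, hi0 ▸ hx⟩⟩
      set i := A.min' hAne with hi
      have hiA : i ∈ A := A.min'_mem hAne
      have hib : s ∈ Metric.ball (ctr i) δ := by
        rw [hA, Finset.mem_filter] at hiA; exact hiA.2
      have hmin : ∀ j, s ∈ Metric.ball (ctr j) δ → i ≤ j := fun j hj =>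
        A.min'_le j (by rw [hA, Finset.mem_filter]; exact ⟨Finset.mem_univ _, hj⟩)
      refine ⟨i, ⟨⟨⟨hsD, hib⟩, ?_⟩, by simpa [Metric.mem_ball] using hib⟩, ?_⟩
      · simp only [Set.mem_iUnion]
        rintro ⟨j, hji, hjb⟩
        exact absurd (hmin j hjb) (not_le.2 hji)
      · intro j hji hQj
        rcases lt_or_gt_of_ne hji with h | h
        · exact absurd (hmin j hQj.1.2) (not_le.2 h)
        · exact hQj.2 (Set.mem_iUnion.2 ⟨i, Set.mem_iUnion.2 ⟨h, hib⟩⟩)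
    have hnorm : ‖T - Tn‖ ≤ cD * cΩ * ε₁ := by
      apply ContinuousLinearMap.opNorm_le_bound _ (by positivity)
      intro c
      rw [ContinuousLinearMap.sub_apply]
      have hTnco : ⇑(Tn c) =ᵐ[volume.restrict D]
          fun s => ∑ i : Fin n,
            (@inner ℝ _ _ (g (ctr i)) c) * (Q i).indicator (fun _ => (1 : ℝ)) s := by
        have h1 : Tn c = ∑ i : Fin n, (@inner ℝ _ _ (g (ctr i)) c) • χ i := by
          rw [hTn, ContinuousLinearMap.sum_apply]
          rfl
        rw [h1]
        have h2 := Lp.coeFn_finsetSum (Finset.univ : Finset (Fin n))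
          (fun i => (@inner ℝ _ _ (g (ctr i)) c) • χ i)
        refine h2.trans ?_
        have h3 : ∀ i : Fin n, ⇑((@inner ℝ _ _ (g (ctr i)) c) • χ i)
            =ᵐ[volume.restrict D]
            fun s => (@inner ℝ _ _ (g (ctr i)) c) * (Q i).indicator (fun _ => (1 : ℝ)) s := by
          intro i
          filter_upwards [Lp.coeFn_smul (@inner ℝ _ _ (g (ctr i)) c) (χ i),
            indicatorConstLp_coeFn (p := 2) (hs := hQmeas i)
              (hμs := measure_ne_top (volume.restrict D) (Q i)) (c := (1 : ℝ))] with s hs1 hs2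
          rw [hs1]
          simp only [Pi.smul_apply, smul_eq_mul]
          exact congrArg (fun z : ℝ => (@inner ℝ _ _ (g (ctr i)) c) * z) hs2
        have h4 : ∀ᵐ s ∂(volume.restrict D), ∀ i : Fin n,
            ((@inner ℝ _ _ (g (ctr i)) c) • χ i) s
              = (@inner ℝ _ _ (g (ctr i)) c) * (Q i).indicator (fun _ => (1 : ℝ)) s := by
          rw [MeasureTheory.ae_all_iff]
          exact h3
        filter_upwards [h4] with s hs
        exact Finset.sum_congr rfl fun i _ => hs i
      have key : ∀ᵐ s ∂(volume.restrict D),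
          ‖(T c - Tn c : Lp ℝ 2 (volume.restrict D)) s‖ ≤ cΩ * ε₁ * ‖c‖ := by
        filter_upwards [Lp.coeFn_sub (T c) (Tn c), hTco c, hTnco, ae_restrict_mem hDm]
          with s h1 h2 h3 hsD
        rw [h1]
        simp only [Pi.sub_apply]
        rw [hTapp c] at *
        rw [h2, h3]
        obtain ⟨⟨hiQ, hidist⟩, huniq⟩ := (hexists s hsD).choose_spec
        set i := (hexists s hsD).choose
        have hsum : (∑ j : Fin n,
            (@inner ℝ _ _ (g (ctr j)) c) * (Q j).indicator (fun _ => (1 : ℝ)) s)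
            = @inner ℝ _ _ (g (ctr i)) c := by
          rw [Finset.sum_eq_single i]
          · rw [Set.indicator_of_mem hiQ]; ring
          · intro j _ hji
            rw [Set.indicator_of_notMem (huniq j hji)]; ring
          · intro h; exact absurd (Finset.mem_univ i) h
        rw [hsum]
        have hdiff : Φ c s - @inner ℝ _ _ (g (ctr i)) c
            = @inner ℝ _ _ (g s - g (ctr i)) c := by
          rw [hΦdef]; rw [inner_sub_left]
        rw [hdiff, Real.norm_eq_abs]
        have hb : ‖g s - g (ctr i)‖ ≤ cΩ * ε₁ :=
          hgsub s (subset_closure hsD) (ctr i) (hctrmem i) ε₁ hε₁.le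
            (fun x hx => hu s (subset_closure hsD) (ctr i) (hctrmem i) hidist x hx)
        calc |@inner ℝ _ _ (g s - g (ctr i)) c| ≤ ‖g s - g (ctr i)‖ * ‖c‖ :=
            abs_real_inner_le_norm _ _
          _ ≤ cΩ * ε₁ * ‖c‖ := mul_le_mul_of_nonneg_right hb (norm_nonneg c)
      calc ‖T c - Tn c‖ ≤ cD * (cΩ * ε₁ * ‖c‖) :=
          Lp.norm_le_of_ae_bound (by positivity) key
        _ = cD * cΩ * ε₁ * ‖c‖ := by ring
    calc ‖T - Tn‖ ≤ cD * cΩ * ε₁ := hnorm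
      _ < ε := by
          have h0 : (0:ℝ) < cD * cΩ + 1 := by positivity
          rw [hε₁def, ← mul_div_assoc, div_lt_iff₀ h0]
          nlinarith [mul_nonneg hcDnn hcΩnn]
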